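/- For all 1 ≤ s < t ≤ L+1 and m ≥ 0 with C_opt(s,t,m) < ∞, the recursive extraction procedure OptRec applied to the dynamic-programming table returns a valid memory-persistent schedule for the subchain from s to t: if the minimum is attained by the checkpoint branch with split point s', it returns the concatenation of (F_ck^s, F_ø^{s+1}, …, F_ø^{s'−1}), an optimal schedule for the subchain from s' to t with memory m−w_a^{s'−1}, and an optimal schedule for the subchain from s to s'−1 with memory m; if the minimum is attained by the store-all branch, it returns F_all^s, followed by an optimal schedule for the subchain from s+1 to t with memory m−w_ā^s, followed by B^s. The returned schedule has peak memory at most m and computation time exactly C_opt(s,t,m). -/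

import Mathlib

/-!
Formal model of the checkpointing problem for back-propagation through a chain
of stages `1, …, L+1` (Beaumont et al., "Optimal checkpointing for heterogeneous
chains").

Data items are activations `a ℓ`, saved internal states `abar ℓ` and gradients
`delta ℓ`.  Operations are `Fall ℓ` (forward storing all intermediate data),
`Fck ℓ` (forward keeping its input), `Fnone ℓ` (forward replacing its input by
its output) and `B ℓ` (backward step).  A schedule for the subchain from `s` to
`t` starts from memory `{a (s-1), delta t}` and must end having produced
`delta (s-1)`.
-/

namespace Checkpoint

inductive Data : Type
  | a (ℓ : ℕ)
  | abar (ℓ : ℕ)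
  | delta (ℓ : ℕ)
  deriving DecidableEq

inductive Op : Type
  | Fall (ℓ : ℕ)
  | Fck (ℓ : ℕ)
  | Fnone (ℓ : ℕ)
  | B (ℓ : ℕ)
  deriving DecidableEq

/-- A chain of `L+1` stages: sizes of activations `wa`, of saved internal
states `wbar`, of gradients `wdelta`; durations `uf`, `ub` and memory
overheads `of`, `ob` of forward and backward operations. -/
structure Chain where
  L : ℕ
  wa : ℕ → ℕ
  wbar : ℕ → ℕ
  wdelta : ℕ → ℕ
  uf : ℕ → ℕ
  ub : ℕ → ℕ
  of : ℕ → ℕ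
  ob : ℕ → ℕ

def Op.stage : Op → ℕ
  | .Fall ℓ => ℓ
  | .Fck ℓ => ℓ
  | .Fnone ℓ => ℓ
  | .B ℓ => ℓ

def Op.duration (c : Chain) : Op → ℕ
  | .Fall ℓ => c.uf ℓ
  | .Fck ℓ => c.uf ℓ
  | .Fnone ℓ => c.uf ℓ
  | .B ℓ => c.ub ℓ

def Data.size (c : Chain) : Data → ℕ
  | .a ℓ => c.wa ℓ
  | .abar ℓ => c.wbar ℓ
  | .delta ℓ => c.wdelta ℓ

/-- Executing one operation on memory `M`: `some M'` if all its inputs are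
present in `M`, `none` otherwise.  `Fall ℓ` and `Fck ℓ` accept `a (ℓ-1)` or
`abar (ℓ-1)` as input and keep it; `Fnone ℓ` consumes `a (ℓ-1)`; `B ℓ`
consumes `delta ℓ` and `abar ℓ`, uses `abar (ℓ-1)` as third input if it is
present (keeping it), and otherwise consumes `a (ℓ-1)`. -/
def Op.exec : Op → Finset Data → Option (Finset Data)
  | .Fall ℓ, M =>
      if Data.a (ℓ - 1) ∈ M ∨ Data.abar (ℓ - 1) ∈ M then
        some (insert (Data.abar ℓ) M) else none
  | .Fck ℓ, M =>
      if Data.a (ℓ - 1) ∈ M ∨ Data.abar (ℓ - 1) ∈ M then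
        some (insert (Data.a ℓ) M) else none
  | .Fnone ℓ, M =>
      if Data.a (ℓ - 1) ∈ M then
        some (insert (Data.a ℓ) (M.erase (Data.a (ℓ - 1)))) else none
  | .B ℓ, M =>
      if Data.delta ℓ ∈ M ∧ Data.abar ℓ ∈ M ∧
          (Data.a (ℓ - 1) ∈ M ∨ Data.abar (ℓ - 1) ∈ M) then
        some (insert (Data.delta (ℓ - 1))
          (if Data.abar (ℓ - 1) ∈ M then
            (M.erase (Data.delta ℓ)).erase (Data.abar ℓ)
          else
            ((M.erase (Data.delta ℓ)).erase (Data.abar ℓ)).erase (Data.a (ℓ - 1))))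
      else none

/-- Executing a list of operations, returning the final memory contents. -/
def execList : Finset Data → List Op → Option (Finset Data)
  | M, [] => some M
  | M, op :: ops => (op.exec M).bind fun M' => execList M' ops

/-- The trace of memory states (before each operation, and after the last). -/
def memTrace : Finset Data → List Op → Option (List (Finset Data))
  | M, [] => some [M]
  | M, op :: ops => (op.exec M).bind fun M' => (memTrace M' ops).map fun tr => M :: tr

/-- Initial memory contents of the subchain from `s` to `t`. -/
def startMem (s t : ℕ) : Finset Data := {Data.a (s - 1), Data.delta t}

/-- Total size of the data in memory, the size of the subchain input
`a (s-1)` being by convention not counted. -/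
def memSize (c : Chain) (s : ℕ) (M : Finset Data) : ℕ :=
  ∑ d ∈ M.erase (Data.a (s - 1)), d.size c

/-- Memory usage during an operation executed from memory `M`, producing
memory `M'`: for a forward operation, the data in memory during its execution
are its input and its output (i.e. `M ∪ M'`); a backward step is executed with
all the data of `M` in memory (its output `delta (ℓ-1)` only materializes at
completion).  The overhead of the operation is added. -/
def opUsage (c : Chain) (s : ℕ) (M M' : Finset Data) : Op → ℕ
  | .Fall ℓ => memSize c s (M ∪ M') + c.of ℓ
  | .Fck ℓ => memSize c s (M ∪ M') + c.of ℓ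
  | .Fnone ℓ => memSize c s (M ∪ M') + c.of ℓ
  | .B ℓ => memSize c s M + c.ob ℓ

/-- Peak memory usage of a sequence of operations run from memory `M`
(`none` if some operation cannot be executed). -/
def peakMem (c : Chain) (s : ℕ) : Finset Data → List Op → Option ℕ
  | _, [] => some 0
  | M, op :: ops =>
      (op.exec M).bind fun M' =>
        (peakMem c s M' ops).map fun p => max (opUsage c s M M' op) p

/-- Total computation time of a schedule. -/
def schedTime (c : Chain) (S : List Op) : ℕ := (S.map (Op.duration c)).sum

/-- A valid schedule for the subchain from `s` to `t`: it only uses operations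
of stages `s, …, t`, every operation's inputs are present in memory when it is
executed, and the schedule ends having produced `delta (s-1)`. -/
def Valid (s t : ℕ) (S : List Op) : Prop :=
  (∀ op ∈ S, s ≤ op.stage ∧ op.stage ≤ t) ∧
  ∃ Mf, execList (startMem s t) S = some Mf ∧ Data.delta (s - 1) ∈ Mf

/-- The peak memory of the schedule `S` for the subchain from `s` to `t` is at
most `m`. -/
def PeakLE (c : Chain) (s t m : ℕ) (S : List Op) : Prop :=
  ∃ p, peakMem c s (startMem s t) S = some p ∧ p ≤ m

/-- Auxiliary predicate for memory persistence: `prev` is the memory state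
before the previous operation (if any) and `M` the current memory state.
A stored value may only be removed by a backward operation using it; hence a
forward operation `Fnone ℓ` may only consume a value `a (ℓ-1)` that was
produced by the immediately preceding operation (a transient value, which was
never stored). -/
def persistAux : Option (Finset Data) → Finset Data → List Op → Prop
  | _, _, [] => True
  | prev, M, op :: ops =>
      (∀ ℓ, op = Op.Fnone ℓ → ∃ P, prev = some P ∧ Data.a (ℓ - 1) ∉ P) ∧
      ∀ M', op.exec M = some M' → persistAux (some M) M' ops

/-- A schedule is memory persistent if every stored value is kept in memory
until it is used by a backward operation. -/
def Persistent (s t : ℕ) (S : List Op) : Prop :=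
  persistAux none (startMem s t) S

/-- `m_∅(s,t)`: memory needed to execute all the forward steps from `s` to `t`
without saving any activation, while `delta t` is stored. -/
def mNone (c : Chain) (s t : ℕ) : ℕ :=
  max (c.wdelta t + c.wa s + c.of s)
    ((Finset.Icc (s + 1) (t - 1)).sup fun j =>
      c.wdelta t + c.wa (j - 1) + c.wa j + c.of j)

/-- `m_all(s,t)`: memory needed to run `Fall s` (with `delta t` stored) and the
backward step `B s`. -/
def mAll (c : Chain) (s t : ℕ) : ℕ :=
  max (c.wdelta t + c.wbar s + c.of s) (c.wdelta s + c.wbar s + c.ob s)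

/-- The dynamic programming recurrence `C_opt(s,t,m)` for the optimal
computation time of a memory-persistent schedule for the subchain from `s` to
`t` under memory bound `m`. -/
noncomputable def Copt (c : Chain) (s t m : ℕ) : ℕ∞ :=
  if h : t ≤ s then
    (if mAll c s s ≤ m then ((c.uf s + c.ub s : ℕ) : ℕ∞) else ⊤)
  else
    min
      (if mNone c s t ≤ m then
        (Finset.Icc (s + 1) t).attach.inf fun s' =>
          ((∑ k ∈ Finset.Ico s s'.1, c.uf k : ℕ) : ℕ∞)
            + Copt c s'.1 t (m - c.wa (s'.1 - 1)) + Copt c s (s'.1 - 1) m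
      else ⊤)
      (if mAll c s t ≤ m then
        ((c.uf s : ℕ) : ℕ∞) + Copt c (s + 1) t (m - c.wbar s) + ((c.ub s : ℕ) : ℕ∞)
      else ⊤)
termination_by t - s
decreasing_by
  · have hs' := s'.2
    simp only [Finset.mem_Icc] at hs'
    omega
  · have hs' := s'.2
    simp only [Finset.mem_Icc] at hs'
    omega
  · omega

end Checkpoint

namespace Checkpoint

/-- An optimal schedule for the subchain from `s` to `t` under memory bound
`m`: a valid memory-persistent schedule with peak memory at most `m` and
computation time exactly `C_opt(s,t,m)`. -/
def OptSched (c : Chain) (s t m : ℕ) (S : List Op) : Prop :=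
  Valid s t S ∧ Persistent s t S ∧ PeakLE c s t m S ∧
    (schedTime c S : ℕ∞) = Copt c s t m

lemma execList_append (l₁ l₂ : List Op) : ∀ M,
    execList M (l₁ ++ l₂) = (execList M l₁).bind fun M₁ => execList M₁ l₂ := by
  induction l₁ with
  | nil => intro M; simp [execList]
  | cons op l ih =>
    intro M
    simp only [List.cons_append, execList]
    cases op.exec M <;> simp [ih]

lemma peakMem_append (c : Chain) (s : ℕ) (l₁ l₂ : List Op) : ∀ M,
    peakMem c s M (l₁ ++ l₂) =
      (execList M l₁).bind fun M₁ =>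
        (peakMem c s M l₁).bind fun p₁ =>
          (peakMem c s M₁ l₂).map fun p₂ => max p₁ p₂ := by
  induction l₁ with
  | nil =>
    intro M
    simp [execList, peakMem]
  | cons op l ih =>
    intro M
    simp only [List.cons_append, peakMem, execList]
    cases h : op.exec M with
    | none => rfl
    | some M' =>
      simp only [Option.bind_some, List.append_eq]
      rw [ih]
      cases execList M' l with
      | none => simp
      | some M₁ =>
        cases peakMem c s M' l with
        | none => simp
        | some p₁ =>
          simp only [Option.bind_some, Option.map_map]
          congr 1
          funext p
          simp [sup_assoc]

lemma persistAux_anyPrev (S : List Op) (M : Finset Data) (q : Option (Finset Data))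
    (h : persistAux none M S) : persistAux q M S := by
  cases S with
  | nil => trivial
  | cons op l =>
    refine ⟨fun ℓ hF => ?_, h.2⟩
    obtain ⟨P, hP, -⟩ := h.1 ℓ hF
    cases hP

lemma persistAux_append (S₁ S₂ : List Op) : ∀ (p : Option (Finset Data)) M M₁,
    execList M S₁ = some M₁ → persistAux p M S₁ →
    (∀ q, persistAux q M₁ S₂) → persistAux p M (S₁ ++ S₂) := by
  induction S₁ with
  | nil =>
    intro p M M₁ he h1 h2
    simp only [execList, Option.some.injEq] at he
    subst he
    exact h2 p
  | cons op l ih =>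
    intro p M M₁ he h1 h2
    simp only [execList] at he
    cases hop : op.exec M with
    | none => rw [hop] at he; exact absurd he (by simp [Option.bind])
    | some M' =>
      rw [hop] at he; simp only [Option.bind_some] at he
      refine ⟨h1.1, fun M'' hM'' => ?_⟩
      rw [hop] at hM''
      cases hM''
      exact ih (some M) M' M₁ he (h1.2 M' hop) h2

/-- The data item produced by an operation. -/
def Op.out : Op → Data
  | .Fall ℓ => Data.abar ℓ
  | .Fck ℓ => Data.a ℓ
  | .Fnone ℓ => Data.a ℓ
  | .B ℓ => Data.delta (ℓ - 1)

lemma exec_subset {op : Op} {M M' : Finset Data} (h : op.exec M = some M') :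
    M' ⊆ insert op.out M := by
  cases op with
  | Fall ℓ =>
    simp only [Op.exec] at h
    split_ifs at h
    cases h
    exact Finset.Subset.refl _
  | Fck ℓ =>
    simp only [Op.exec] at h
    split_ifs at h
    cases h
    exact Finset.Subset.refl _
  | Fnone ℓ =>
    simp only [Op.exec] at h
    split_ifs at h
    cases h
    exact Finset.insert_subset_insert _ (Finset.erase_subset _ _)
  | B ℓ =>
    simp only [Op.exec] at h
    split_ifs at h <;>
    · cases h
      refine Finset.insert_subset_insert _ ?_
      intro d hd
      simp only [Finset.mem_erase] at hd
      tauto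

lemma mem_a_of_exec {op : Op} {M M' : Finset Data} (h : op.exec M = some M')
    {ℓ : ℕ} (hne : ℓ ≠ op.stage) (hmem : Data.a ℓ ∈ M') : Data.a ℓ ∈ M := by
  have := exec_subset h hmem
  rw [Finset.mem_insert] at this
  rcases this with h' | h'
  · cases op <;> simp [Op.out] at h' <;> simp [Op.stage] at hne <;> omega
  · exact h'

lemma mem_abar_of_exec {op : Op} {M M' : Finset Data} (h : op.exec M = some M')
    {ℓ : ℕ} (hne : ℓ ≠ op.stage) (hmem : Data.abar ℓ ∈ M') : Data.abar ℓ ∈ M := by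
  have := exec_subset h hmem
  rw [Finset.mem_insert] at this
  rcases this with h' | h'
  · cases op <;> simp [Op.out] at h' <;> simp [Op.stage] at hne <;> omega
  · exact h'

lemma memSize_mono {c : Chain} {s : ℕ} {M N : Finset Data} (h : M ⊆ N) :
    memSize c s M ≤ memSize c s N :=
  Finset.sum_le_sum_of_subset (Finset.erase_subset_erase _ h)

lemma memSize_insert_le (c : Chain) (s : ℕ) (x : Data) (M : Finset Data) :
    memSize c s (insert x M) ≤ x.size c + memSize c s M := by
  unfold memSize
  by_cases hx : x = Data.a (s - 1)
  · subst hx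
    rw [Finset.erase_insert_eq_erase]
    exact Nat.le_add_left _ _
  · rw [Finset.erase_insert_of_ne hx]
    by_cases hM : x ∈ M.erase (Data.a (s - 1))
    · rw [Finset.insert_eq_self.mpr hM]; exact Nat.le_add_left _ _
    · rw [Finset.sum_insert hM]

lemma memSize_insert_input (c : Chain) (s : ℕ) (M : Finset Data) :
    memSize c s (insert (Data.a (s - 1)) M) = memSize c s M := by
  unfold memSize
  rw [Finset.erase_insert_eq_erase]

/-- Changing the non-counted input from `a (s'-1)` to `a (s-1)` costs at most
`wa (s'-1)`. -/
lemma memSize_change (c : Chain) (s s' : ℕ) (M : Finset Data) :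
    memSize c s M ≤ memSize c s' M + c.wa (s' - 1) := by
  unfold memSize
  calc ∑ d ∈ M.erase (Data.a (s - 1)), d.size c
      ≤ ∑ d ∈ M, d.size c := Finset.sum_le_sum_of_subset (Finset.erase_subset _ _)
    _ ≤ (∑ d ∈ M.erase (Data.a (s' - 1)), d.size c) + c.wa (s' - 1) := by
        by_cases hM : Data.a (s' - 1) ∈ M
        · rw [← Finset.sum_erase_add M (Data.size c) hM]; exact le_rfl
        · rw [Finset.erase_eq_of_notMem hM]; exact Nat.le_add_right _ _

/-- The store-all memory transformation. -/
def substA (s : ℕ) (M : Finset Data) : Finset Data :=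
  insert (Data.abar s) (insert (Data.a (s - 1)) (M.erase (Data.a s)))

lemma substA_union (s : ℕ) (M N : Finset Data) :
    substA s (M ∪ N) = substA s M ∪ substA s N := by
  unfold substA
  rw [Finset.erase_union_distrib, Finset.insert_union_distrib, Finset.insert_union_distrib]

lemma memSize_substA (c : Chain) (s : ℕ) (hs : 1 ≤ s) {M : Finset Data}
    (hbar : Data.abar s ∉ M) (hx : Data.a (s - 1) ∉ M) :
    memSize c s (substA s M) = c.wbar s + memSize c (s + 1) M := by
  unfold substA memSize
  have h1 : (Data.abar s : Data) ≠ Data.a (s - 1) := by simp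
  rw [Finset.erase_insert_of_ne h1, Finset.erase_insert_eq_erase]
  have h2 : (M.erase (Data.a s)).erase (Data.a (s - 1)) = M.erase (Data.a s) := by
    apply Finset.erase_eq_of_notMem
    simp only [Finset.mem_erase]
    tauto
  rw [h2, Finset.sum_insert (by simp [Finset.mem_erase]; tauto)]
  simp [Data.size, Nat.add_sub_cancel]

lemma erase_comm' (M : Finset Data) (a b : Data) :
    (M.erase a).erase b = (M.erase b).erase a := by
  ext d; simp only [Finset.mem_erase]; tauto

/-- Executing an operation of stage `≥ s+1` commutes with inserting the inert
item `a (s-1)`. -/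
lemma exec_insert_a {s : ℕ} (hs : 1 ≤ s) {op : Op} (hst : s + 1 ≤ op.stage)
    {M M' : Finset Data} (h : op.exec M = some M') :
    op.exec (insert (Data.a (s - 1)) M) = some (insert (Data.a (s - 1)) M') := by
  cases op with
  | Fall ℓ =>
    simp only [Op.stage] at hst
    simp only [Op.exec] at h ⊢
    split_ifs at h with hc
    · cases h
      rw [if_pos (Or.imp Finset.mem_insert_of_mem Finset.mem_insert_of_mem hc),
        Finset.insert_comm]
  | Fck ℓ =>
    simp only [Op.stage] at hst
    simp only [Op.exec] at h ⊢
    split_ifs at h with hc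
    · cases h
      rw [if_pos (Or.imp Finset.mem_insert_of_mem Finset.mem_insert_of_mem hc),
        Finset.insert_comm]
  | Fnone ℓ =>
    simp only [Op.stage] at hst
    simp only [Op.exec] at h ⊢
    split_ifs at h with hc
    · cases h
      have hne : Data.a (s - 1) ≠ Data.a (ℓ - 1) := by simp; omega
      rw [if_pos (Finset.mem_insert_of_mem hc), Finset.erase_insert_of_ne hne,
        Finset.insert_comm]
  | B ℓ =>
    simp only [Op.stage] at hst
    simp only [Op.exec] at h ⊢
    have hnea : Data.a (s - 1) ≠ Data.a (ℓ - 1) := by simp; omega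
    have hned : Data.a (s - 1) ≠ Data.delta ℓ := by simp
    have hneb : Data.a (s - 1) ≠ Data.abar ℓ := by simp
    split_ifs at h with hc hb
    · cases h
      have hc' : Data.delta ℓ ∈ insert (Data.a (s - 1)) M ∧
          Data.abar ℓ ∈ insert (Data.a (s - 1)) M ∧
          (Data.a (ℓ - 1) ∈ insert (Data.a (s - 1)) M ∨
            Data.abar (ℓ - 1) ∈ insert (Data.a (s - 1)) M) := by
        refine ⟨Finset.mem_insert_of_mem hc.1, Finset.mem_insert_of_mem hc.2.1,
          Or.imp Finset.mem_insert_of_mem Finset.mem_insert_of_mem hc.2.2⟩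
      rw [if_pos hc', if_pos (by simpa using hb), Finset.erase_insert_of_ne hned,
        Finset.erase_insert_of_ne hneb, Finset.insert_comm]
    · cases h
      have hc' : Data.delta ℓ ∈ insert (Data.a (s - 1)) M ∧
          Data.abar ℓ ∈ insert (Data.a (s - 1)) M ∧
          (Data.a (ℓ - 1) ∈ insert (Data.a (s - 1)) M ∨
            Data.abar (ℓ - 1) ∈ insert (Data.a (s - 1)) M) := by
        refine ⟨Finset.mem_insert_of_mem hc.1, Finset.mem_insert_of_mem hc.2.1,
          Or.imp Finset.mem_insert_of_mem Finset.mem_insert_of_mem hc.2.2⟩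
      rw [if_pos hc', if_neg (by simpa using hb), Finset.erase_insert_of_ne hned,
        Finset.erase_insert_of_ne hneb, Finset.erase_insert_of_ne hnea,
        Finset.insert_comm]

/-- Executing an operation of stage `≥ s+2` commutes with inserting the inert
item `abar s`. -/
lemma exec_insert_abar {s : ℕ} {op : Op} (hst : s + 2 ≤ op.stage)
    {M M' : Finset Data} (h : op.exec M = some M') :
    op.exec (insert (Data.abar s) M) = some (insert (Data.abar s) M') := by
  cases op with
  | Fall ℓ =>
    simp only [Op.stage] at hst
    simp only [Op.exec] at h ⊢
    split_ifs at h with hc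
    · cases h
      rw [if_pos (Or.imp Finset.mem_insert_of_mem Finset.mem_insert_of_mem hc),
        Finset.insert_comm]
  | Fck ℓ =>
    simp only [Op.stage] at hst
    simp only [Op.exec] at h ⊢
    split_ifs at h with hc
    · cases h
      rw [if_pos (Or.imp Finset.mem_insert_of_mem Finset.mem_insert_of_mem hc),
        Finset.insert_comm]
  | Fnone ℓ =>
    simp only [Op.stage] at hst
    simp only [Op.exec] at h ⊢
    split_ifs at h with hc
    · cases h
      have hne : Data.abar s ≠ Data.a (ℓ - 1) := by simp
      rw [if_pos (Finset.mem_insert_of_mem hc), Finset.erase_insert_of_ne hne,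
        Finset.insert_comm]
  | B ℓ =>
    simp only [Op.stage] at hst
    simp only [Op.exec] at h ⊢
    have hnea : Data.abar s ≠ Data.a (ℓ - 1) := by simp
    have hned : Data.abar s ≠ Data.delta ℓ := by simp
    have hneb : Data.abar s ≠ Data.abar ℓ := by simp; omega
    have hneb' : Data.abar s ≠ Data.abar (ℓ - 1) := by simp; omega
    split_ifs at h with hc hb
    · cases h
      have hc' : Data.delta ℓ ∈ insert (Data.abar s) M ∧
          Data.abar ℓ ∈ insert (Data.abar s) M ∧
          (Data.a (ℓ - 1) ∈ insert (Data.abar s) M ∨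
            Data.abar (ℓ - 1) ∈ insert (Data.abar s) M) :=
        ⟨Finset.mem_insert_of_mem hc.1, Finset.mem_insert_of_mem hc.2.1,
          Or.imp Finset.mem_insert_of_mem Finset.mem_insert_of_mem hc.2.2⟩
      rw [if_pos hc', if_pos (Finset.mem_insert_of_mem hb), Finset.erase_insert_of_ne hned,
        Finset.erase_insert_of_ne hneb, Finset.insert_comm]
    · cases h
      have hc' : Data.delta ℓ ∈ insert (Data.abar s) M ∧
          Data.abar ℓ ∈ insert (Data.abar s) M ∧
          (Data.a (ℓ - 1) ∈ insert (Data.abar s) M ∨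
            Data.abar (ℓ - 1) ∈ insert (Data.abar s) M) :=
        ⟨Finset.mem_insert_of_mem hc.1, Finset.mem_insert_of_mem hc.2.1,
          Or.imp Finset.mem_insert_of_mem Finset.mem_insert_of_mem hc.2.2⟩
      have hb' : Data.abar (ℓ - 1) ∉ insert (Data.abar s) M := by
        simp only [Finset.mem_insert]
        rintro (h' | h')
        · exact hneb' h'.symm
        · exact hb h'
      rw [if_pos hc', if_neg hb', Finset.erase_insert_of_ne hned,
        Finset.erase_insert_of_ne hneb, Finset.erase_insert_of_ne hnea,
        Finset.insert_comm]

/-- Executing an operation of stage `≥ s+2` commutes with erasing the inert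
item `a s`. -/
lemma exec_erase_a {s : ℕ} {op : Op} (hst : s + 2 ≤ op.stage)
    {M M' : Finset Data} (h : op.exec M = some M') :
    op.exec (M.erase (Data.a s)) = some (M'.erase (Data.a s)) := by
  cases op with
  | Fall ℓ =>
    simp only [Op.stage] at hst
    simp only [Op.exec] at h ⊢
    have hne : Data.a (ℓ - 1) ≠ Data.a s := by simp; omega
    have hne2 : Data.abar (ℓ - 1) ≠ Data.a s := by simp
    have hne3 : Data.abar ℓ ≠ Data.a s := by simp
    split_ifs at h with hc
    · cases h
      rw [if_pos (Or.imp (Finset.mem_erase_of_ne_of_mem hne)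
        (Finset.mem_erase_of_ne_of_mem hne2) hc), Finset.erase_insert_of_ne hne3]
  | Fck ℓ =>
    simp only [Op.stage] at hst
    simp only [Op.exec] at h ⊢
    have hne : Data.a (ℓ - 1) ≠ Data.a s := by simp; omega
    have hne2 : Data.abar (ℓ - 1) ≠ Data.a s := by simp
    have hne3 : Data.a ℓ ≠ Data.a s := by simp; omega
    split_ifs at h with hc
    · cases h
      rw [if_pos (Or.imp (Finset.mem_erase_of_ne_of_mem hne)
        (Finset.mem_erase_of_ne_of_mem hne2) hc), Finset.erase_insert_of_ne hne3]
  | Fnone ℓ =>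
    simp only [Op.stage] at hst
    simp only [Op.exec] at h ⊢
    have hne : Data.a (ℓ - 1) ≠ Data.a s := by simp; omega
    have hne3 : Data.a ℓ ≠ Data.a s := by simp; omega
    split_ifs at h with hc
    · cases h
      rw [if_pos (Finset.mem_erase_of_ne_of_mem hne hc), Finset.erase_insert_of_ne hne3,
        erase_comm']
  | B ℓ =>
    simp only [Op.stage] at hst
    simp only [Op.exec] at h ⊢
    have hne : Data.a (ℓ - 1) ≠ Data.a s := by simp; omega
    have hne2 : Data.abar (ℓ - 1) ≠ Data.a s := by simp
    have hned : Data.delta ℓ ≠ Data.a s := by simp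
    have hneb : Data.abar ℓ ≠ Data.a s := by simp
    have hout : Data.delta (ℓ - 1) ≠ Data.a s := by simp
    split_ifs at h with hc hb
    · cases h
      have hc' := And.intro (Finset.mem_erase_of_ne_of_mem hned hc.1)
        (And.intro (Finset.mem_erase_of_ne_of_mem hneb hc.2.1)
          (Or.imp (Finset.mem_erase_of_ne_of_mem hne)
            (Finset.mem_erase_of_ne_of_mem hne2) hc.2.2))
      rw [if_pos hc', if_pos (Finset.mem_erase_of_ne_of_mem hne2 hb),
        Finset.erase_insert_of_ne hout]
      congr 1
      rw [erase_comm' M (Data.a s) (Data.delta ℓ), erase_comm' _ (Data.a s) (Data.abar ℓ)]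
    · cases h
      have hc' := And.intro (Finset.mem_erase_of_ne_of_mem hned hc.1)
        (And.intro (Finset.mem_erase_of_ne_of_mem hneb hc.2.1)
          (Or.imp (Finset.mem_erase_of_ne_of_mem hne)
            (Finset.mem_erase_of_ne_of_mem hne2) hc.2.2))
      have hb' : Data.abar (ℓ - 1) ∉ M.erase (Data.a s) :=
        fun h' => hb (Finset.mem_of_mem_erase h')
      rw [if_pos hc', if_neg hb', Finset.erase_insert_of_ne hout]
      congr 1
      rw [erase_comm' M (Data.a s) (Data.delta ℓ), erase_comm' _ (Data.a s) (Data.abar ℓ),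
        erase_comm' _ (Data.a s) (Data.a (ℓ - 1))]

lemma substA_insert {s : ℕ} {x : Data} (h1 : x ≠ Data.abar s) (h2 : x ≠ Data.a (s - 1))
    (h3 : x ≠ Data.a s) (M : Finset Data) :
    substA s (insert x M) = insert x (substA s M) := by
  unfold substA
  rw [Finset.erase_insert_of_ne h3, Finset.insert_comm (Data.a (s - 1)) x,
    Finset.insert_comm (Data.abar s) x]

/-- Executing an operation of stage `≥ s+1` other than `Fnone (s+1)` commutes
with the store-all memory transformation. -/
lemma exec_substA {s : ℕ} (hs : 1 ≤ s) {op : Op} (hst : s + 1 ≤ op.stage)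
    (hF : op ≠ Op.Fnone (s + 1)) {M M' : Finset Data}
    (hbar : Data.abar s ∉ M) (h : op.exec M = some M') :
    op.exec (substA s M) = some (substA s M') := by
  rcases Nat.lt_or_ge (s + 1) op.stage with hgt | hle
  · exact exec_insert_abar hgt (exec_insert_a hs hst (exec_erase_a hgt h))
  · have hstage : op.stage = s + 1 := le_antisymm hle hst
    cases op with
    | Fall ℓ =>
      simp only [Op.stage] at hstage
      subst hstage
      simp only [Op.exec, Nat.add_sub_cancel] at h ⊢
      split_ifs at h with hc
      cases h
      rw [if_pos (Or.inr (show Data.abar s ∈ substA s M from Finset.mem_insert_self _ _)),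
        substA_insert (by simp) (by simp) (by simp)]
    | Fck ℓ =>
      simp only [Op.stage] at hstage
      subst hstage
      simp only [Op.exec, Nat.add_sub_cancel] at h ⊢
      split_ifs at h with hc
      cases h
      rw [if_pos (Or.inr (show Data.abar s ∈ substA s M from Finset.mem_insert_self _ _)),
        substA_insert (by simp) (by simp; omega) (by simp)]
    | B ℓ =>
      simp only [Op.stage] at hstage
      subst hstage
      simp only [Op.exec, Nat.add_sub_cancel] at h ⊢
      split_ifs at h with hc
      cases h
      have hmd : Data.delta (s + 1) ∈ substA s M := by
        unfold substA
        exact Finset.mem_insert_of_mem (Finset.mem_insert_of_mem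
          (Finset.mem_erase_of_ne_of_mem (by simp) hc.1))
      have hmb : Data.abar (s + 1) ∈ substA s M := by
        unfold substA
        exact Finset.mem_insert_of_mem (Finset.mem_insert_of_mem
          (Finset.mem_erase_of_ne_of_mem (by simp) hc.2.1))
      have hmbar : Data.abar s ∈ substA s M := Finset.mem_insert_self _ _
      rw [if_pos ⟨hmd, hmb, Or.inr hmbar⟩, if_pos hmbar]
      congr 1
      unfold substA
      rw [Finset.erase_insert_of_ne (show Data.abar s ≠ Data.delta (s + 1) by simp),
        Finset.erase_insert_of_ne (show Data.a (s - 1) ≠ Data.delta (s + 1) by simp),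
        Finset.erase_insert_of_ne (show Data.abar s ≠ Data.abar (s + 1) by simp),
        Finset.erase_insert_of_ne (show Data.a (s - 1) ≠ Data.abar (s + 1) by simp),
        Finset.erase_insert_of_ne (show Data.delta s ≠ Data.a s by simp),
        Finset.erase_idem,
        erase_comm' _ (Data.a s) (Data.delta (s + 1)),
        erase_comm' _ (Data.a s) (Data.abar (s + 1)),
        Finset.insert_comm (Data.a (s - 1)) (Data.delta s),
        Finset.insert_comm (Data.abar s) (Data.delta s)]
    | Fnone ℓ =>
      simp only [Op.stage] at hstage
      subst hstage
      exact absurd rfl hF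

lemma opUsage_insert_le (c : Chain) (s s' : ℕ) (op : Op) (M M' : Finset Data) :
    opUsage c s (insert (Data.a (s - 1)) M) (insert (Data.a (s - 1)) M') op ≤
      opUsage c s' M M' op + c.wa (s' - 1) := by
  have key : ∀ N : Finset Data, memSize c s (insert (Data.a (s - 1)) N) ≤
      memSize c s' N + c.wa (s' - 1) := by
    intro N
    rw [memSize_insert_input]
    exact memSize_change c s s' N
  cases op with
  | Fall ℓ =>
    simp only [opUsage]
    rw [← Finset.insert_union_distrib]
    have := key (M ∪ M')
    omega
  | Fck ℓ =>
    simp only [opUsage]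
    rw [← Finset.insert_union_distrib]
    have := key (M ∪ M')
    omega
  | Fnone ℓ =>
    simp only [opUsage]
    rw [← Finset.insert_union_distrib]
    have := key (M ∪ M')
    omega
  | B ℓ =>
    simp only [opUsage]
    have := key M
    omega

lemma opUsage_substA (c : Chain) (s : ℕ) (hs : 1 ≤ s) (op : Op) {M M' : Finset Data}
    (h1 : Data.abar s ∉ M) (h2 : Data.a (s - 1) ∉ M)
    (h3 : Data.abar s ∉ M') (h4 : Data.a (s - 1) ∉ M') :
    opUsage c s (substA s M) (substA s M') op = opUsage c (s + 1) M M' op + c.wbar s := by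
  have hu : Data.abar s ∉ M ∪ M' := by simp [Finset.mem_union]; tauto
  have hu2 : Data.a (s - 1) ∉ M ∪ M' := by simp [Finset.mem_union]; tauto
  cases op with
  | Fall ℓ =>
    simp only [opUsage]
    rw [← substA_union, memSize_substA c s hs hu hu2]
    omega
  | Fck ℓ =>
    simp only [opUsage]
    rw [← substA_union, memSize_substA c s hs hu hu2]
    omega
  | Fnone ℓ =>
    simp only [opUsage]
    rw [← substA_union, memSize_substA c s hs hu hu2]
    omega
  | B ℓ =>
    simp only [opUsage]
    rw [memSize_substA c s hs h1 h2]
    omega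

/-- Simulation of a schedule in a context with the extra inert item `a (s-1)`. -/
lemma sim_ins (c : Chain) (s s' : ℕ) (hs : 1 ≤ s) :
    ∀ (S : List Op) (M Mf : Finset Data),
      (∀ op ∈ S, s + 1 ≤ op.stage) →
      Data.a (s - 1) ∉ M →
      execList M S = some Mf →
      execList (insert (Data.a (s - 1)) M) S = some (insert (Data.a (s - 1)) Mf) ∧
      Data.a (s - 1) ∉ Mf ∧
      (∀ p, peakMem c s' M S = some p →
        ∃ p', peakMem c s (insert (Data.a (s - 1)) M) S = some p' ∧
          p' ≤ p + c.wa (s' - 1)) ∧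
      (∀ q, persistAux none M S → persistAux q (insert (Data.a (s - 1)) M) S) ∧
      (∀ P, persistAux (some P) M S →
        persistAux (some (insert (Data.a (s - 1)) P)) (insert (Data.a (s - 1)) M) S) := by
  intro S
  induction S with
  | nil =>
    intro M Mf _ hM he
    simp only [execList, Option.some.injEq] at he; subst he
    exact ⟨rfl, hM, fun p hp => ⟨p, hp, Nat.le_add_right _ _⟩,
      fun q _ => trivial, fun P _ => trivial⟩
  | cons op l ih =>
    intro M Mf hstages hM he
    simp only [execList] at he
    cases hop : op.exec M with
    | none => rw [hop] at he; exact absurd he (by simp [Option.bind])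
    | some M' =>
    rw [hop] at he; simp only [Option.bind_some] at he
    have hstop := hstages op (List.mem_cons_self)
    have hop' := exec_insert_a hs hstop hop
    have hM' : Data.a (s - 1) ∉ M' := fun hmem =>
      hM (mem_a_of_exec hop (by omega) hmem)
    have IH := ih M' Mf (fun o ho => hstages o (List.mem_cons_of_mem _ ho)) hM' he
    refine ⟨?_, IH.2.1, ?_, ?_, ?_⟩
    · simp only [execList, hop', Option.bind_some]; exact IH.1
    · intro p hp
      simp only [peakMem, hop, Option.bind_some] at hp
      cases hpl : peakMem c s' M' l with
      | none => rw [hpl] at hp; exact absurd hp (by simp)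
      | some pl =>
      rw [hpl] at hp
      simp only [Option.map_some, Option.some.injEq] at hp
      obtain ⟨p', hp', hle⟩ := IH.2.2.1 pl hpl
      refine ⟨max (opUsage c s (insert (Data.a (s - 1)) M) (insert (Data.a (s - 1)) M') op) p',
        ?_, ?_⟩
      · simp only [peakMem, hop', Option.bind_some, hp', Option.map_some]
      · have h1 := opUsage_insert_le c s s' op M M'
        have : opUsage c s' M M' op ⊔ pl = p := hp
        have h2 : opUsage c s' M M' op ≤ p := le_trans le_sup_left this.le
        have h3 : pl ≤ p := le_trans le_sup_right this.le
        refine max_le (le_trans h1 (by omega)) (le_trans hle (by omega))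
    · intro q hpers
      refine ⟨fun ℓ hF => ?_, fun M'' hM'' => ?_⟩
      · obtain ⟨P, hP, -⟩ := hpers.1 ℓ hF
        cases hP
      · rw [hop'] at hM''
        cases hM''
        exact IH.2.2.2.2 M (hpers.2 M' hop)
    · intro P hpers
      refine ⟨fun ℓ hF => ?_, fun M'' hM'' => ?_⟩
      · obtain ⟨P₀, hP₀, hnot⟩ := hpers.1 ℓ hF
        cases hP₀
        refine ⟨_, rfl, ?_⟩
        simp only [Finset.mem_insert]
        rintro (h' | h')
        · have : op.stage = ℓ := by subst hF; rfl
          simp at h'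
          omega
        · exact hnot h'
      · rw [hop'] at hM''
        cases hM''
        exact IH.2.2.2.2 M (hpers.2 M' hop)

/-- Simulation of a schedule for the subchain from `s+1` after `Fall s`. -/
lemma sim_all (c : Chain) (s : ℕ) (hs : 1 ≤ s) :
    ∀ (S : List Op) (M Mf : Finset Data),
      (∀ op ∈ S, s + 1 ≤ op.stage) →
      Op.Fnone (s + 1) ∉ S →
      Data.abar s ∉ M → Data.a (s - 1) ∉ M →
      execList M S = some Mf →
      execList (substA s M) S = some (substA s Mf) ∧
      Data.abar s ∉ Mf ∧ Data.a (s - 1) ∉ Mf ∧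
      (∀ p, peakMem c (s + 1) M S = some p →
        ∃ p', peakMem c s (substA s M) S = some p' ∧ p' ≤ p + c.wbar s) ∧
      (∀ q, persistAux none M S → persistAux q (substA s M) S) ∧
      (∀ P, persistAux (some P) M S →
        persistAux (some (substA s P)) (substA s M) S) := by
  intro S
  induction S with
  | nil =>
    intro M Mf _ _ hbar hx he
    simp only [execList, Option.some.injEq] at he; subst he
    exact ⟨rfl, hbar, hx, fun p hp => ⟨p, hp, Nat.le_add_right _ _⟩,
      fun q _ => trivial, fun P _ => trivial⟩
  | cons op l ih =>
    intro M Mf hstages hF hbar hx he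
    simp only [execList] at he
    cases hop : op.exec M with
    | none => rw [hop] at he; exact absurd he (by simp [Option.bind])
    | some M' =>
    rw [hop] at he; simp only [Option.bind_some] at he
    have hstop := hstages op (List.mem_cons_self)
    have hFop : op ≠ Op.Fnone (s + 1) := fun h' => hF (h' ▸ List.mem_cons_self)
    have hop' := exec_substA hs hstop hFop hbar hop
    have hbar' : Data.abar s ∉ M' := fun hmem =>
      hbar (mem_abar_of_exec hop (by omega) hmem)
    have hx' : Data.a (s - 1) ∉ M' := fun hmem =>
      hx (mem_a_of_exec hop (by omega) hmem)
    have IH := ih M' Mf (fun o ho => hstages o (List.mem_cons_of_mem _ ho))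
      (fun h' => hF (List.mem_cons_of_mem _ h')) hbar' hx' he
    refine ⟨?_, IH.2.1, IH.2.2.1, ?_, ?_, ?_⟩
    · simp only [execList, hop', Option.bind_some]; exact IH.1
    · intro p hp
      simp only [peakMem, hop, Option.bind_some] at hp
      cases hpl : peakMem c (s + 1) M' l with
      | none => rw [hpl] at hp; exact absurd hp (by simp)
      | some pl =>
      rw [hpl] at hp
      simp only [Option.map_some, Option.some.injEq] at hp
      obtain ⟨p', hp', hle⟩ := IH.2.2.2.1 pl hpl
      refine ⟨max (opUsage c s (substA s M) (substA s M') op) p', ?_, ?_⟩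
      · simp only [peakMem, hop', Option.bind_some, hp', Option.map_some]
      · have h1 := opUsage_substA c s hs op hbar hx hbar' hx'
        have : opUsage c (s + 1) M M' op ⊔ pl = p := hp
        have h2 : opUsage c (s + 1) M M' op ≤ p := le_trans le_sup_left this.le
        have h3 : pl ≤ p := le_trans le_sup_right this.le
        refine max_le (by omega) (le_trans hle (by omega))
    · intro q hpers
      refine ⟨fun ℓ hF' => ?_, fun M'' hM'' => ?_⟩
      · obtain ⟨P, hP, -⟩ := hpers.1 ℓ hF'
        cases hP
      · rw [hop'] at hM''
        cases hM''
        exact IH.2.2.2.2.2 M (hpers.2 M' hop)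
    · intro P hpers
      refine ⟨fun ℓ hF' => ?_, fun M'' hM'' => ?_⟩
      · obtain ⟨P₀, hP₀, hnot⟩ := hpers.1 ℓ hF'
        cases hP₀
        refine ⟨_, rfl, ?_⟩
        have hstℓ : op.stage = ℓ := by subst hF'; rfl
        have hℓ : s + 2 ≤ ℓ := by
          rcases Nat.lt_or_ge (s + 1) ℓ with h' | h'
          · omega
          · exfalso; apply hFop; rw [hF']; congr 1; omega
        unfold substA
        simp only [Finset.mem_insert, Finset.mem_erase]
        rintro (h' | h' | ⟨-, h'⟩)
        · simp at h'
        · simp at h'; omega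
        · exact hnot h'
      · rw [hop'] at hM''
        cases hM''
        exact IH.2.2.2.2.2 M (hpers.2 M' hop)

lemma fnone_not_mem (s : ℕ) : ∀ (S : List Op) (M Mf : Finset Data) (P : Option (Finset Data)),
    (∀ op ∈ S, s + 1 ≤ op.stage) →
    persistAux P M S → execList M S = some Mf →
    (∀ Q, P = some Q → Data.a s ∈ M → Data.a s ∈ Q) →
    Op.Fnone (s + 1) ∉ S := by
  intro S
  induction S with
  | nil => intro M Mf P _ _ _ _; simp
  | cons op l ih =>
    intro M Mf P hstages hpers he hinv
    simp only [execList] at he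
    cases hop : op.exec M with
    | none => rw [hop] at he; exact absurd he (by simp [Option.bind])
    | some M' =>
    rw [hop] at he; simp only [Option.bind_some] at he
    intro hmem
    rcases List.mem_cons.mp hmem with heq | hmem'
    · obtain ⟨Q, hPQ, hnot⟩ := hpers.1 (s + 1) heq.symm
      have hasM : Data.a s ∈ M := by
        rw [← heq] at hop
        simp only [Op.exec, Nat.add_sub_cancel] at hop
        by_contra hn
        rw [if_neg hn] at hop
        cases hop
      exact hnot (hinv Q hPQ hasM)
    · refine ih M' Mf (some M) (fun o ho => hstages o (List.mem_cons_of_mem _ ho))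
        (hpers.2 M' hop) he (fun Q hQ hmemM' => ?_) hmem'
      cases hQ
      have hstop := hstages op (List.mem_cons_self)
      exact mem_a_of_exec hop (by omega) hmemM'

lemma base_sched (c : Chain) (s m : ℕ) (hs : 1 ≤ s) (hm : mAll c s s ≤ m) :
    OptSched c s s m [Op.Fall s, Op.B s] ∧
    execList (startMem s s) [Op.Fall s, Op.B s] = some {Data.delta (s - 1)} := by
  set M0 := startMem s s with hM0
  set M1 := insert (Data.abar s) M0 with hM1
  have hmem0 : Data.a (s - 1) ∈ M0 := by simp [hM0, startMem]
  have he1 : (Op.Fall s).exec M0 = some M1 := by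
    simp only [Op.exec]
    rw [if_pos (Or.inl hmem0)]
  have hcond : Data.delta s ∈ M1 ∧ Data.abar s ∈ M1 ∧
      (Data.a (s - 1) ∈ M1 ∨ Data.abar (s - 1) ∈ M1) := by
    refine ⟨?_, Finset.mem_insert_self _ _, Or.inl (Finset.mem_insert_of_mem hmem0)⟩
    simp [hM1, hM0, startMem]
  have hnb : Data.abar (s - 1) ∉ M1 := by
    simp [hM1, hM0, startMem]
    omega
  have hfin : insert (Data.delta (s - 1))
      (((M1.erase (Data.delta s)).erase (Data.abar s)).erase (Data.a (s - 1)))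
      = {Data.delta (s - 1)} := by
    ext d
    cases d <;> simp [hM1, hM0, startMem] <;> omega
  have he2 : (Op.B s).exec M1 = some {Data.delta (s - 1)} := by
    simp only [Op.exec]
    rw [if_pos hcond, if_neg hnb, hfin]
  have hexec : execList M0 [Op.Fall s, Op.B s] = some {Data.delta (s - 1)} := by
    simp only [execList, he1, Option.bind_some, he2]
  have hms : memSize c s M1 = c.wbar s + c.wdelta s := by
    have : M1.erase (Data.a (s - 1)) = {Data.abar s, Data.delta s} := by
      ext d
      cases d <;> simp [hM1, hM0, startMem] <;> omega
    unfold memSize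
    rw [this, Finset.sum_pair (by simp)]
    rfl
  have hu1 : opUsage c s M0 M1 (Op.Fall s) ≤ mAll c s s := by
    simp only [opUsage]
    have : M0 ∪ M1 = M1 := by
      rw [hM1]
      simp [Finset.union_comm]
    rw [this, hms]
    have := le_max_left (c.wdelta s + c.wbar s + c.of s) (c.wdelta s + c.wbar s + c.ob s)
    unfold mAll
    omega
  have hu2 : opUsage c s M1 {Data.delta (s - 1)} (Op.B s) ≤ mAll c s s := by
    simp only [opUsage]
    rw [hms]
    have := le_max_right (c.wdelta s + c.wbar s + c.of s) (c.wdelta s + c.wbar s + c.ob s)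
    unfold mAll
    omega
  have hpeak : peakMem c s M0 [Op.Fall s, Op.B s] =
      some (max (opUsage c s M0 M1 (Op.Fall s))
        (max (opUsage c s M1 {Data.delta (s - 1)} (Op.B s)) 0)) := by
    simp only [peakMem, he1, Option.bind_some, he2, Option.map_some]
  have hcopt : Copt c s s m = ((c.uf s + c.ub s : ℕ) : ℕ∞) := by
    rw [Copt, dif_pos (le_refl s), if_pos hm]
  refine ⟨⟨⟨?_, ⟨_, hexec, by simp⟩⟩, ?_, ⟨_, hpeak, ?_⟩, ?_⟩, hexec⟩
  · intro op hop
    rcases List.mem_cons.mp hop with h' | h'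
    · subst h'; simp [Op.stage]
    · rcases List.mem_cons.mp h' with h'' | h''
      · subst h''; simp [Op.stage]
      · simp at h''
  · refine ⟨fun ℓ h' => Op.noConfusion h', fun M' hM' => ?_⟩
    rw [he1] at hM'
    cases hM'
    refine ⟨fun ℓ h' => Op.noConfusion h', fun M'' hM'' => trivial⟩
  · have := max_le (le_trans hu1 hm) (max_le (le_trans hu2 hm) (Nat.zero_le m))
    exact this
  · rw [hcopt]
    simp [schedTime, Op.duration]

lemma sum_range'_map (f : ℕ → ℕ) : ∀ (n a : ℕ),
    (((List.range' a n).map f).sum) = ∑ k ∈ Finset.Ico a (a + n), f k := by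
  intro n
  induction n with
  | zero => intro a; simp
  | succ n ih =>
    intro a
    rw [List.range'_succ]
    simp only [List.map_cons, List.sum_cons]
    rw [ih (a + 1), Finset.sum_eq_sum_Ico_succ_bot (show a < a + (n + 1) by omega) f,
      show a + 1 + n = a + (n + 1) by omega]

lemma fnone_chain (c : Chain) (s t : ℕ) (hs : 1 ≤ s) :
    ∀ (k j : ℕ), s + 1 ≤ j → j + k ≤ t →
      execList (insert (Data.a (j - 1)) (startMem s t)) ((List.range' j k).map Op.Fnone)
        = some (insert (Data.a (j + k - 1)) (startMem s t)) ∧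
      (∃ p, peakMem c s (insert (Data.a (j - 1)) (startMem s t))
          ((List.range' j k).map Op.Fnone) = some p ∧ p ≤ mNone c s t) ∧
      (∀ (P : Finset Data), Data.a (j - 1) ∉ P →
        ∀ rest, (∀ q, persistAux q (insert (Data.a (j + k - 1)) (startMem s t)) rest) →
        persistAux (some P) (insert (Data.a (j - 1)) (startMem s t))
          ((List.range' j k).map Op.Fnone ++ rest)) := by
  intro k
  induction k with
  | zero =>
    intro j hj hjt
    refine ⟨rfl, ⟨0, rfl, Nat.zero_le _⟩, fun P hP rest hrest => ?_⟩
    simpa using hrest (some P)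
  | succ k ih =>
    intro j hj hjt
    have hnotin : Data.a (j - 1) ∉ startMem s t := by
      simp [startMem]
      omega
    have hnotin2 : Data.a j ∉ startMem s t := by
      simp [startMem]
      omega
    have herase : (insert (Data.a (j - 1)) (startMem s t)).erase (Data.a (j - 1))
        = startMem s t := by
      rw [Finset.erase_insert_eq_erase, Finset.erase_eq_of_notMem hnotin]
    have he1 : (Op.Fnone j).exec (insert (Data.a (j - 1)) (startMem s t))
        = some (insert (Data.a j) (startMem s t)) := by
      simp only [Op.exec]
      rw [if_pos (Finset.mem_insert_self _ _), herase]
    have hidx : j + (k + 1) - 1 = (j + 1) + k - 1 := by omega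
    have hidx2 : (j + 1) - 1 = j := by omega
    have IH := ih (j + 1) (by omega) (by omega)
    rw [hidx2] at IH
    rw [List.range'_succ]
    simp only [List.map_cons]
    refine ⟨?_, ?_, ?_⟩
    · simp only [execList, he1, Option.bind_some]
      rw [IH.1, hidx]
    · obtain ⟨p, hp, hple⟩ := IH.2.1
      have husage : opUsage c s (insert (Data.a (j - 1)) (startMem s t))
          (insert (Data.a j) (startMem s t)) (Op.Fnone j) ≤ mNone c s t := by
        simp only [opUsage]
        have hun : insert (Data.a (j - 1)) (startMem s t) ∪ insert (Data.a j) (startMem s t)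
            = insert (Data.a (j - 1)) (insert (Data.a j) (startMem s t)) := by
          ext d
          simp [startMem]
          tauto
        have hms : memSize c s (insert (Data.a (j - 1)) (insert (Data.a j) (startMem s t)))
            = c.wa (j - 1) + c.wa j + c.wdelta t := by
          have herase2 : (insert (Data.a (j - 1)) (insert (Data.a j) (startMem s t))).erase
              (Data.a (s - 1)) = {Data.a (j - 1), Data.a j, Data.delta t} := by
            ext d
            cases d <;> simp [startMem] <;> omega
          unfold memSize
          rw [herase2]
          rw [Finset.sum_insert (by simp; omega), Finset.sum_pair (by simp)]
          simp [Data.size]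
          omega
        rw [hun, hms]
        have hcomp : c.wdelta t + c.wa (j - 1) + c.wa j + c.of j ≤ mNone c s t := by
          refine le_trans ?_ (le_max_right _ _)
          exact Finset.le_sup (f := fun j => c.wdelta t + c.wa (j - 1) + c.wa j + c.of j)
            (Finset.mem_Icc.mpr ⟨hj, by omega⟩)
        omega
      refine ⟨max (opUsage c s (insert (Data.a (j - 1)) (startMem s t))
          (insert (Data.a j) (startMem s t)) (Op.Fnone j)) p, ?_, ?_⟩
      · simp only [peakMem, he1, Option.bind_some, hp, Option.map_some]
      · exact max_le husage hple
    · intro P hP rest hrest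
      refine ⟨fun ℓ hF => ?_, fun M' hM' => ?_⟩
      · injection hF with h'
        subst h'
        exact ⟨P, rfl, hP⟩
      · rw [he1] at hM'
        cases hM'
        have := IH.2.2 (insert (Data.a (j - 1)) (startMem s t))
          (by simp [startMem]; omega) rest (by rw [← hidx] at *; exact fun q => by rw [hidx]; exact hrest q)
        exact this

lemma combine_all (c : Chain) (s t m : ℕ) (hs : 1 ≤ s) (hst : s < t)
    (hm : mAll c s t ≤ m)
    (heq : Copt c s t m = ((c.uf s : ℕ) : ℕ∞) + Copt c (s + 1) t (m - c.wbar s)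
      + ((c.ub s : ℕ) : ℕ∞))
    (S₁ : List Op) (h₁ : OptSched c (s + 1) t (m - c.wbar s) S₁)
    (hex : execList (startMem (s + 1) t) S₁ = some {Data.delta s}) :
    OptSched c s t m (Op.Fall s :: (S₁ ++ [Op.B s])) ∧
    execList (startMem s t) (Op.Fall s :: (S₁ ++ [Op.B s])) = some {Data.delta (s - 1)} := by
  obtain ⟨⟨hstages, _⟩, hpers, ⟨p₁, hpeak₁, hp₁le⟩, htime⟩ := h₁
  have hlow : ∀ op ∈ S₁, s + 1 ≤ op.stage := fun op hop => (hstages op hop).1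
  have hFnone : Op.Fnone (s + 1) ∉ S₁ :=
    fnone_not_mem s S₁ (startMem (s + 1) t) {Data.delta s} none hlow hpers hex
      (fun Q hQ => by cases hQ)
  have hbar0 : Data.abar s ∉ startMem (s + 1) t := by simp [startMem]
  have hx0 : Data.a (s - 1) ∉ startMem (s + 1) t := by simp [startMem]; omega
  have SIM := sim_all c s hs S₁ (startMem (s + 1) t) {Data.delta s} hlow hFnone hbar0 hx0 hex
  have hsub : substA s (startMem (s + 1) t) = insert (Data.abar s) (startMem s t) := by
    ext d
    cases d <;> simp [substA, startMem] <;> omega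
  set M1 := insert (Data.abar s) (startMem s t) with hM1
  have he1 : (Op.Fall s).exec (startMem s t) = some M1 := by
    simp only [Op.exec]
    rw [if_pos (Or.inl (by simp [startMem]))]
  have hexecS₁ : execList M1 S₁ = some (substA s {Data.delta s}) := by
    rw [← hsub]; exact SIM.1
  have hnb : Data.abar (s - 1) ∉ substA s {Data.delta s} := by
    simp [substA]
    omega
  have hcond : Data.delta s ∈ substA s {Data.delta s} ∧ Data.abar s ∈ substA s {Data.delta s} ∧
      (Data.a (s - 1) ∈ substA s {Data.delta s} ∨ Data.abar (s - 1) ∈ substA s {Data.delta s}) := by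
    refine ⟨by simp [substA], Finset.mem_insert_self _ _, Or.inl (by simp [substA])⟩
  have hfin : insert (Data.delta (s - 1))
      ((((substA s {Data.delta s}).erase (Data.delta s)).erase (Data.abar s)).erase
        (Data.a (s - 1))) = {Data.delta (s - 1)} := by
    ext d
    cases d <;> simp [substA] <;> omega
  have he2 : (Op.B s).exec (substA s {Data.delta s}) = some {Data.delta (s - 1)} := by
    simp only [Op.exec]
    rw [if_pos hcond, if_neg hnb, hfin]
  have hexec : execList (startMem s t) (Op.Fall s :: (S₁ ++ [Op.B s]))
      = some {Data.delta (s - 1)} := by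
    simp only [execList, he1, Option.bind_some, execList_append, hexecS₁, he2]
  have hwle : c.wbar s ≤ m := le_trans (le_trans (by omega : c.wbar s ≤ c.wdelta t + c.wbar s + c.of s) (le_max_left _ _)) hm
  -- memory sizes
  have hmsM1 : memSize c s M1 = c.wbar s + c.wdelta t := by
    have : M1.erase (Data.a (s - 1)) = {Data.abar s, Data.delta t} := by
      ext d
      cases d <;> simp [hM1, startMem] <;> omega
    unfold memSize
    rw [this, Finset.sum_pair (by simp)]
    simp [Data.size]
  have hmsM2 : memSize c s (substA s {Data.delta s}) = c.wbar s + c.wdelta s := by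
    have : (substA s {Data.delta s}).erase (Data.a (s - 1)) = {Data.abar s, Data.delta s} := by
      ext d
      cases d <;> simp [substA] <;> omega
    unfold memSize
    rw [this, Finset.sum_pair (by simp)]
    simp [Data.size]
  have hu0 : opUsage c s (startMem s t) M1 (Op.Fall s) ≤ m := by
    simp only [opUsage]
    have hun : startMem s t ∪ M1 = M1 := by
      rw [hM1]
      simp [Finset.union_comm]
    rw [hun, hmsM1]
    have := le_trans (le_max_left (c.wdelta t + c.wbar s + c.of s)
      (c.wdelta s + c.wbar s + c.ob s)) hm
    omega
  have huB : opUsage c s (substA s {Data.delta s}) {Data.delta (s - 1)} (Op.B s) ≤ m := by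
    simp only [opUsage]
    rw [hmsM2]
    have := le_trans (le_max_right (c.wdelta t + c.wbar s + c.of s)
      (c.wdelta s + c.wbar s + c.ob s)) hm
    omega
  obtain ⟨p₁', hp₁', hle'⟩ := SIM.2.2.2.1 p₁ hpeak₁
  have hpeakB : peakMem c s (substA s {Data.delta s}) [Op.B s]
      = some (max (opUsage c s (substA s {Data.delta s}) {Data.delta (s - 1)} (Op.B s)) 0) := by
    simp only [peakMem, he2, Option.bind_some, Option.map_some]
  have hpeak : peakMem c s (startMem s t) (Op.Fall s :: (S₁ ++ [Op.B s]))
      = some (max (opUsage c s (startMem s t) M1 (Op.Fall s))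
          (max p₁' (max (opUsage c s (substA s {Data.delta s}) {Data.delta (s - 1)} (Op.B s)) 0))) := by
    simp only [peakMem, he1, Option.bind_some, peakMem_append, hexecS₁]
    rw [show peakMem c s M1 S₁ = some p₁' from hsub ▸ hp₁']
    simp only [Option.bind_some, hpeakB, Option.map_some, he2]
  refine ⟨⟨⟨?_, ⟨_, hexec, by simp⟩⟩, ?_, ⟨_, hpeak, ?_⟩, ?_⟩, hexec⟩
  · intro op hop
    rcases List.mem_cons.mp hop with h' | h'
    · subst h'; simp [Op.stage]; omega
    · rcases List.mem_append.mp h' with h'' | h''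
      · have := hstages op h''
        omega
      · simp at h''
        subst h''
        simp [Op.stage]
        omega
  · refine ⟨fun ℓ h' => Op.noConfusion h', fun M' hM' => ?_⟩
    rw [he1] at hM'
    cases hM'
    refine persistAux_append S₁ [Op.B s] (some (startMem s t)) M1 (substA s {Data.delta s})
      hexecS₁ ?_ ?_
    · rw [← hsub]
      exact SIM.2.2.2.2.1 (some (startMem s t)) hpers
    · intro q
      exact ⟨fun ℓ h' => Op.noConfusion h', fun M'' hM'' => trivial⟩
  · refine max_le hu0 (max_le (by omega) (max_le huB (Nat.zero_le _)))
  · have htm : schedTime c (Op.Fall s :: (S₁ ++ [Op.B s]))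
        = c.uf s + schedTime c S₁ + c.ub s := by
      simp [schedTime, Op.duration]
      omega
    rw [htm, heq, ← htime]
    push_cast
    ring

lemma schedTime_append (c : Chain) (l₁ l₂ : List Op) :
    schedTime c (l₁ ++ l₂) = schedTime c l₁ + schedTime c l₂ := by
  simp [schedTime]

lemma combine_ck (c : Chain) (s s' t m : ℕ) (hs : 1 ≤ s) (hs' : s + 1 ≤ s') (hs't : s' ≤ t)
    (hm : mNone c s t ≤ m)
    (heq : Copt c s t m = ((∑ k ∈ Finset.Ico s s', c.uf k : ℕ) : ℕ∞)
        + Copt c s' t (m - c.wa (s' - 1)) + Copt c s (s' - 1) m)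
    (S₁ S₂ : List Op)
    (h₁ : OptSched c s' t (m - c.wa (s' - 1)) S₁)
    (hex₁ : execList (startMem s' t) S₁ = some {Data.delta (s' - 1)})
    (h₂ : OptSched c s (s' - 1) m S₂)
    (hex₂ : execList (startMem s (s' - 1)) S₂ = some {Data.delta (s - 1)}) :
    OptSched c s t m
      ((Op.Fck s :: (List.range' (s + 1) (s' - s - 1)).map Op.Fnone) ++ S₁ ++ S₂) ∧
    execList (startMem s t)
      ((Op.Fck s :: (List.range' (s + 1) (s' - s - 1)).map Op.Fnone) ++ S₁ ++ S₂)
      = some {Data.delta (s - 1)} := by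
  obtain ⟨⟨hstages₁, _⟩, hpers₁, ⟨p₁, hpeak₁, hp₁le⟩, htime₁⟩ := h₁
  obtain ⟨⟨hstages₂, _⟩, hpers₂, ⟨p₂, hpeak₂, hp₂le⟩, htime₂⟩ := h₂
  have hlow₁ : ∀ op ∈ S₁, s + 1 ≤ op.stage := fun op hop => by
    have := (hstages₁ op hop).1
    omega
  have hx0 : Data.a (s - 1) ∉ startMem s' t := by simp [startMem]; omega
  have SIM := sim_ins c s s' hs S₁ (startMem s' t) {Data.delta (s' - 1)} hlow₁ hx0 hex₁
  have hA : insert (Data.a (s - 1)) (startMem s' t)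
      = insert (Data.a (s' - 1)) (startMem s t) := by
    ext d
    cases d <;> simp [startMem] <;> omega
  have hB : insert (Data.a (s - 1)) ({Data.delta (s' - 1)} : Finset Data)
      = startMem s (s' - 1) := by
    ext d
    cases d <;> simp [startMem]
  -- prefix
  have heFck : (Op.Fck s).exec (startMem s t) = some (insert (Data.a s) (startMem s t)) := by
    simp only [Op.exec]
    rw [if_pos (Or.inl (by simp [startMem]))]
  have CH := fnone_chain c s t hs (s' - s - 1) (s + 1) (le_refl _) (by omega)
  rw [Nat.add_sub_cancel, show s + 1 + (s' - s - 1) - 1 = s' - 1 from by omega] at CH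
  -- executions
  have hexecS₁ : execList (insert (Data.a (s' - 1)) (startMem s t)) S₁
      = some (startMem s (s' - 1)) := by
    rw [← hA, ← hB]
    exact SIM.1
  have hexecPRE : execList (startMem s t)
      (Op.Fck s :: (List.range' (s + 1) (s' - s - 1)).map Op.Fnone)
      = some (insert (Data.a (s' - 1)) (startMem s t)) := by
    simp only [execList, heFck, Option.bind_some]
    exact CH.1
  have hexec : execList (startMem s t)
      ((Op.Fck s :: (List.range' (s + 1) (s' - s - 1)).map Op.Fnone) ++ S₁ ++ S₂)
      = some {Data.delta (s - 1)} := by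
    rw [execList_append, execList_append, hexecPRE]
    simp only [Option.bind_some]
    rw [hexecS₁]
    simp only [Option.bind_some]
    exact hex₂
  -- peak
  have hwa : c.wa (s' - 1) ≤ mNone c s t := by
    rcases eq_or_lt_of_le hs' with h' | h'
    · rw [show s' - 1 = s from by omega]
      exact le_trans (by omega) (le_max_left _ _)
    · have hmem : s' - 1 ∈ Finset.Icc (s + 1) (t - 1) := Finset.mem_Icc.mpr ⟨by omega, by omega⟩
      have h1 := Finset.le_sup (f := fun j => c.wdelta t + c.wa (j - 1) + c.wa j + c.of j) hmem
      exact le_trans (by omega : c.wa (s' - 1) ≤ c.wdelta t + c.wa (s' - 1 - 1) + c.wa (s' - 1)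
        + c.of (s' - 1)) (le_trans h1 (le_max_right _ _))
  obtain ⟨pPre, hpPre, hpPreLe⟩ := CH.2.1
  obtain ⟨p₁', hp₁', hp₁'le⟩ := SIM.2.2.1 p₁ hpeak₁
  rw [hA] at hp₁'
  have huFck : opUsage c s (startMem s t) (insert (Data.a s) (startMem s t)) (Op.Fck s) ≤ m := by
    simp only [opUsage]
    have hun : startMem s t ∪ insert (Data.a s) (startMem s t)
        = insert (Data.a s) (startMem s t) := by
      simp [Finset.union_comm]
    rw [hun]
    have hmssz : memSize c s (insert (Data.a s) (startMem s t)) = c.wa s + c.wdelta t := by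
      have : (insert (Data.a s) (startMem s t)).erase (Data.a (s - 1))
          = {Data.a s, Data.delta t} := by
        ext d
        cases d <;> simp [startMem] <;> omega
      unfold memSize
      rw [this, Finset.sum_pair (by simp)]
      simp [Data.size]
    rw [hmssz]
    have := le_trans (le_max_left (c.wdelta t + c.wa s + c.of s) _) hm
    omega
  have hpeakPRE : peakMem c s (startMem s t)
      (Op.Fck s :: (List.range' (s + 1) (s' - s - 1)).map Op.Fnone)
      = some (max (opUsage c s (startMem s t) (insert (Data.a s) (startMem s t)) (Op.Fck s))
          pPre) := by
    simp only [peakMem, heFck, Option.bind_some, hpPre, Option.map_some]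
  have hpk1 : peakMem c s (startMem s t)
      ((Op.Fck s :: (List.range' (s + 1) (s' - s - 1)).map Op.Fnone) ++ S₁)
      = some (max (max (opUsage c s (startMem s t) (insert (Data.a s) (startMem s t))
          (Op.Fck s)) pPre) p₁') := by
    rw [peakMem_append, hexecPRE]
    simp only [Option.bind_some]
    rw [hpeakPRE]
    simp only [Option.bind_some]
    rw [hp₁']
    simp only [Option.map_some]
  have hexecPS₁ : execList (startMem s t)
      ((Op.Fck s :: (List.range' (s + 1) (s' - s - 1)).map Op.Fnone) ++ S₁)
      = some (startMem s (s' - 1)) := by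
    rw [execList_append, hexecPRE]
    simp only [Option.bind_some]
    exact hexecS₁
  have hpk : peakMem c s (startMem s t)
      ((Op.Fck s :: (List.range' (s + 1) (s' - s - 1)).map Op.Fnone) ++ S₁ ++ S₂)
      = some (max (max (max (opUsage c s (startMem s t) (insert (Data.a s) (startMem s t))
          (Op.Fck s)) pPre) p₁') p₂) := by
    rw [peakMem_append, hexecPS₁]
    simp only [Option.bind_some]
    rw [hpk1]
    simp only [Option.bind_some]
    rw [hpeak₂]
    simp only [Option.map_some]
  -- time
  have htmPre : schedTime c (Op.Fck s :: (List.range' (s + 1) (s' - s - 1)).map Op.Fnone)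
      = ∑ k ∈ Finset.Ico s s', c.uf k := by
    have hmm : List.map (Op.duration c) ((List.range' (s + 1) (s' - s - 1)).map Op.Fnone)
        = List.map c.uf (List.range' (s + 1) (s' - s - 1)) := by
      rw [List.map_map]
      rfl
    simp only [schedTime, List.map_cons, List.sum_cons, hmm]
    rw [sum_range'_map c.uf (s' - s - 1) (s + 1),
      show s + 1 + (s' - s - 1) = s' from by omega,
      Finset.sum_eq_sum_Ico_succ_bot (show s < s' from by omega)]
    rfl
  refine ⟨⟨⟨?_, ⟨_, hexec, by simp⟩⟩, ?_, ⟨_, hpk, ?_⟩, ?_⟩, hexec⟩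
  · intro op hop
    rcases List.mem_append.mp hop with h' | h'
    · rcases List.mem_append.mp h' with h'' | h''
      · rcases List.mem_cons.mp h'' with h3 | h3
        · subst h3; simp [Op.stage]; omega
        · simp only [List.mem_map] at h3
          obtain ⟨j, hj, rfl⟩ := h3
          rw [List.mem_range'_1] at hj
          simp [Op.stage]
          omega
      · have := hstages₁ op h''
        omega
    · have := hstages₂ op h'
      omega
  · refine ⟨fun ℓ h' => Op.noConfusion h', fun M' hM' => ?_⟩
    rw [heFck] at hM'
    cases hM'
    have hrest : ∀ q, persistAux q (insert (Data.a (s' - 1)) (startMem s t)) (S₁ ++ S₂) := by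
      intro q
      refine persistAux_append S₁ S₂ q (insert (Data.a (s' - 1)) (startMem s t))
        (startMem s (s' - 1)) hexecS₁ ?_ ?_
      · rw [← hA]
        exact SIM.2.2.2.1 q hpers₁
      · intro q'
        exact persistAux_anyPrev S₂ _ q' hpers₂
    have := CH.2.2 (startMem s t) (by simp [startMem]; omega) (S₁ ++ S₂) hrest
    -- goal has ((PRE ++ S₁) ++ S₂) after cons; reassociate
    have hassoc : ((List.range' (s + 1) (s' - s - 1)).map Op.Fnone ++ S₁) ++ S₂
        = (List.range' (s + 1) (s' - s - 1)).map Op.Fnone ++ (S₁ ++ S₂) :=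
      List.append_assoc _ _ _
    rw [List.cons_append, List.cons_append] at *
    simpa [List.append_assoc] using this
  · refine max_le (max_le (max_le huFck (le_trans hpPreLe hm)) ?_) hp₂le
    omega
  · rw [schedTime_append, schedTime_append, htmPre, heq, ← htime₁, ← htime₂]
    push_cast
    ring

lemma copt_base_mem {c : Chain} {s m : ℕ} (hfin : Copt c s s m < ⊤) : mAll c s s ≤ m := by
  by_contra hmn
  rw [Copt, dif_pos (le_refl s), if_neg hmn] at hfin
  exact absurd hfin (lt_irrefl ⊤)

lemma exists_optSched (c : Chain) : ∀ (n s t m : ℕ), t - s ≤ n → 1 ≤ s → s ≤ t →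
    Copt c s t m < ⊤ →
    ∃ S, OptSched c s t m S ∧ execList (startMem s t) S = some {Data.delta (s - 1)} := by
  intro n
  induction n with
  | zero =>
    intro s t m hn hs hst hfin
    have ht : t = s := by omega
    subst ht
    exact ⟨_, base_sched c t m hs (copt_base_mem hfin)⟩
  | succ n ih =>
    intro s t m hn hs hst hfin
    rcases eq_or_lt_of_le hst with ht | hlt
    · subst ht
      exact ⟨_, base_sched c s m hs (copt_base_mem hfin)⟩
    · have hCopt : Copt c s t m =
          min
            (if mNone c s t ≤ m then
              (Finset.Icc (s + 1) t).attach.inf fun s' =>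
                ((∑ k ∈ Finset.Ico s s'.1, c.uf k : ℕ) : ℕ∞)
                  + Copt c s'.1 t (m - c.wa (s'.1 - 1)) + Copt c s (s'.1 - 1) m
            else ⊤)
            (if mAll c s t ≤ m then
              ((c.uf s : ℕ) : ℕ∞) + Copt c (s + 1) t (m - c.wbar s) + ((c.ub s : ℕ) : ℕ∞)
            else ⊤) := by
        rw [Copt, dif_neg (by omega)]
      set A := (if mNone c s t ≤ m then
              (Finset.Icc (s + 1) t).attach.inf fun s' =>
                ((∑ k ∈ Finset.Ico s s'.1, c.uf k : ℕ) : ℕ∞)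
                  + Copt c s'.1 t (m - c.wa (s'.1 - 1)) + Copt c s (s'.1 - 1) m
            else ⊤) with hA
      set B := (if mAll c s t ≤ m then
              ((c.uf s : ℕ) : ℕ∞) + Copt c (s + 1) t (m - c.wbar s) + ((c.ub s : ℕ) : ℕ∞)
            else ⊤) with hB
      rcases le_total A B with hAB | hBA
      · have hCA : Copt c s t m = A := by rw [hCopt, min_eq_left hAB]
        have hAfin : A < ⊤ := hCA ▸ hfin
        have hmN : mNone c s t ≤ m := by
          by_contra hmn
          rw [hA, if_neg hmn] at hAfin
          exact absurd hAfin (lt_irrefl ⊤)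
        have hne : ((Finset.Icc (s + 1) t).attach).Nonempty :=
          Finset.attach_nonempty_iff.mpr (Finset.nonempty_Icc.mpr (by omega))
        obtain ⟨s'el, _, hinf⟩ := Finset.exists_mem_eq_inf ((Finset.Icc (s + 1) t).attach) hne
          (fun s' => ((∑ k ∈ Finset.Ico s s'.1, c.uf k : ℕ) : ℕ∞)
            + Copt c s'.1 t (m - c.wa (s'.1 - 1)) + Copt c s (s'.1 - 1) m)
        have hs'mem := s'el.2
        rw [Finset.mem_Icc] at hs'mem
        set s' := s'el.1 with hs'def
        have heq : Copt c s t m = ((∑ k ∈ Finset.Ico s s', c.uf k : ℕ) : ℕ∞)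
            + Copt c s' t (m - c.wa (s' - 1)) + Copt c s (s' - 1) m := by
          rw [hCA, hA, if_pos hmN, hinf]
        have hfin2 := hfin
        rw [heq] at hfin2
        obtain ⟨h12, h3⟩ := WithTop.add_lt_top.mp hfin2
        obtain ⟨_, h2⟩ := WithTop.add_lt_top.mp h12
        obtain ⟨S₁, hS₁, hex₁⟩ := ih s' t (m - c.wa (s' - 1)) (by omega) (by omega)
          (by omega) h2
        obtain ⟨S₂, hS₂, hex₂⟩ := ih s (s' - 1) m (by omega) hs (by omega) h3
        obtain ⟨hopt, hexec⟩ := combine_ck c s s' t m hs (by omega) (by omega) hmN heq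
          S₁ S₂ hS₁ hex₁ hS₂ hex₂
        exact ⟨_, hopt, hexec⟩
      · have hCB : Copt c s t m = B := by rw [hCopt, min_eq_right hBA]
        have hBfin : B < ⊤ := hCB ▸ hfin
        have hmA : mAll c s t ≤ m := by
          by_contra hmn
          rw [hB, if_neg hmn] at hBfin
          exact absurd hBfin (lt_irrefl ⊤)
        have heq : Copt c s t m = ((c.uf s : ℕ) : ℕ∞) + Copt c (s + 1) t (m - c.wbar s)
            + ((c.ub s : ℕ) : ℕ∞) := by
          rw [hCB, hB, if_pos hmA]
        have hfin2 := hfin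
        rw [heq] at hfin2
        obtain ⟨h12, _⟩ := WithTop.add_lt_top.mp hfin2
        obtain ⟨_, h2⟩ := WithTop.add_lt_top.mp h12
        obtain ⟨S₁, hS₁, hex₁⟩ := ih (s + 1) t (m - c.wbar s) (by omega) (by omega)
          (by omega) h2
        simp only [Nat.add_sub_cancel] at hex₁
        obtain ⟨hopt, hexec⟩ := combine_all c s t m hs hlt hmA heq S₁ hS₁ hex₁
        exact ⟨_, hopt, hexec⟩


/-- For all `1 ≤ s < t ≤ L+1` and `m` with
`C_opt(s,t,m) < ∞`, the recursive extraction procedure `OptRec` returns a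
valid memory-persistent schedule for the subchain from `s` to `t`:
if the minimum is attained by the checkpoint branch with split point `s'`
(i.e. `m ≥ m_∅(s,t)` and
`C_opt(s,t,m) = Σ_{k=s}^{s'-1} uf k + C_opt(s',t,m - wa (s'-1)) + C_opt(s,s'-1,m)`),
it returns the concatenation of `(F_ck s, F_ø (s+1), …, F_ø (s'-1))`, an
optimal schedule for the subchain from `s'` to `t` with memory `m - wa (s'-1)`
and an optimal schedule for the subchain from `s` to `s'-1` with memory `m`;
if the minimum is attained by the store-all branch (i.e. `m ≥ m_all(s,t)` and
`C_opt(s,t,m) = uf s + C_opt(s+1,t,m - wā s) + ub s`), it returns `F_all s`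
followed by an optimal schedule for the subchain from `s+1` to `t` with memory
`m - wā s`, followed by `B s`.  The returned schedule has peak memory at most
`m` and computation time exactly `C_opt(s,t,m)`. -/
theorem optRec_correct (c : Chain) (s t m : ℕ)
    (h1 : 1 ≤ s) (h2 : s < t) (h3 : t ≤ c.L + 1)
    (hfin : Copt c s t m < ⊤) :
    (∀ s', s + 1 ≤ s' → s' ≤ t → mNone c s t ≤ m →
      Copt c s t m = ((∑ k ∈ Finset.Ico s s', c.uf k : ℕ) : ℕ∞)
          + Copt c s' t (m - c.wa (s' - 1)) + Copt c s (s' - 1) m →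
      ∃ S₁ S₂ : List Op,
        OptSched c s' t (m - c.wa (s' - 1)) S₁ ∧
        OptSched c s (s' - 1) m S₂ ∧
        OptSched c s t m
          ((Op.Fck s :: (List.range' (s + 1) (s' - s - 1)).map Op.Fnone) ++ S₁ ++ S₂))
    ∧ (mAll c s t ≤ m →
      Copt c s t m = ((c.uf s : ℕ) : ℕ∞) + Copt c (s + 1) t (m - c.wbar s)
          + ((c.ub s : ℕ) : ℕ∞) →
      ∃ S₁ : List Op,
        OptSched c (s + 1) t (m - c.wbar s) S₁ ∧
        OptSched c s t m (Op.Fall s :: (S₁ ++ [Op.B s]))) := by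
  constructor
  · intro s' hs'1 hs'2 hmN heq
    have hfin2 := hfin
    rw [heq] at hfin2
    obtain ⟨h12, h3'⟩ := WithTop.add_lt_top.mp hfin2
    obtain ⟨_, h2'⟩ := WithTop.add_lt_top.mp h12
    obtain ⟨S₁, hS₁, hex₁⟩ := exists_optSched c (t - s') s' t (m - c.wa (s' - 1)) le_rfl
      (by omega) hs'2 h2'
    obtain ⟨S₂, hS₂, hex₂⟩ := exists_optSched c (s' - 1 - s) s (s' - 1) m le_rfl h1
      (by omega) h3'
    exact ⟨S₁, S₂, hS₁, hS₂,
      (combine_ck c s s' t m h1 hs'1 hs'2 hmN heq S₁ S₂ hS₁ hex₁ hS₂ hex₂).1⟩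
  · intro hmA heq
    have hfin2 := hfin
    rw [heq] at hfin2
    obtain ⟨h12, _⟩ := WithTop.add_lt_top.mp hfin2
    obtain ⟨_, h2'⟩ := WithTop.add_lt_top.mp h12
    obtain ⟨S₁, hS₁, hex₁⟩ := exists_optSched c (t - (s + 1)) (s + 1) t (m - c.wbar s) le_rfl
      (by omega) (by omega) h2'
    simp only [Nat.add_sub_cancel] at hex₁
    exact ⟨S₁, hS₁, (combine_all c s t m h1 h2 hmA heq S₁ hS₁ hex₁).1⟩


end Checkpoint
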